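/- (Hardy-type inequality with exponential weight.) Let p > 1, a > 0, and let f : [0,∞) → ℝ be C¹ with ∫_0^∞ |f'(r)|^p e^{ar} dr < ∞ and lim_{r→∞} f(r) = 0. Then ∫_0^∞ |f(r)|^p e^{ar} dr ≤ (p/a)^p ∫_0^∞ |f'(r)|^p e^{ar} dr. -/

import Mathlib

open MeasureTheory Real Set Filter
open scoped ENNReal

lemma hardy_aux_hasDerivAt_abs_rpow {p : ℝ} (hp : 1 < p) (t : ℝ) :
    HasDerivAt (fun x : ℝ => |x| ^ p) (p * |t| ^ (p - 1) * Real.sign t) t := by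
  have hp0 : p ≠ 0 := by linarith
  have hp1 : p - 1 ≠ 0 := sub_ne_zero.2 (by linarith)
  rcases eq_or_ne t 0 with rfl | ht
  · rw [Real.sign_zero, mul_zero]
    rw [hasDerivAt_iff_isLittleO]
    simp only [sub_zero, smul_zero, abs_zero, Real.zero_rpow hp0, sub_zero]
    rw [Asymptotics.isLittleO_iff_tendsto' (by filter_upwards with x hx; simp [hx, Real.zero_rpow hp0])]
    have h0 : Tendsto (fun x : ℝ => |x| ^ (p - 1)) (nhds 0) (nhds 0) := by
      have : ContinuousAt (fun x : ℝ => |x| ^ (p - 1)) 0 := by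
        apply ContinuousAt.rpow_const (continuous_abs.continuousAt)
        right; linarith
      simpa [Real.zero_rpow hp1] using this.tendsto
    apply squeeze_zero_norm _ h0
    intro x
    rcases eq_or_ne x 0 with rfl | hx
    · simp [Real.zero_rpow hp0, Real.zero_rpow hp1]
    · rw [Real.norm_eq_abs, abs_div, abs_of_nonneg (Real.rpow_nonneg (abs_nonneg x) p)]
      rw [div_le_iff₀ (abs_pos.2 hx), ← Real.rpow_add_one (abs_ne_zero.2 hx), sub_add_cancel]
  · have h1 : HasDerivAt (fun y : ℝ => y ^ p) (p * |t| ^ (p - 1)) |t| := by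
      simpa [mul_comm] using Real.hasDerivAt_rpow_const (p := p) (x := |t|) (Or.inl (abs_ne_zero.2 ht))
    have h2 := h1.comp t (hasDerivAt_abs ht)
    have hsign : (SignType.sign t : ℝ) = Real.sign t := by
      rcases ht.lt_or_gt with h | h
      · simp [h, Real.sign_of_neg h]
      · simp [h, Real.sign_of_pos h]
    simpa [Function.comp_def, hsign, mul_comm, mul_assoc] using h2

lemma hardy_aux_ftc (f : ℝ → ℝ) (hf : ContDiffOn ℝ 1 f (Set.Ici 0)) {c d : ℝ} (hc : 0 ≤ c)
    (hcd : c ≤ d) :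
    ∫ x in c..d, derivWithin f (Set.Ici 0) x = f d - f c := by
  have hIcc : Set.Icc c d ⊆ Set.Ici 0 := fun x hx => le_trans hc hx.1
  apply intervalIntegral.integral_eq_sub_of_hasDeriv_right_of_le hcd
    (hf.continuousOn.mono hIcc)
  · intro x hx
    have hx0 : x ∈ Set.Ici (0:ℝ) := le_trans hc (le_of_lt hx.1)
    exact ((hf.differentiableOn one_ne_zero x hx0).hasDerivWithinAt).mono
      (fun y hy => Set.mem_Ici.2 (le_trans (Set.mem_Ici.1 hx0) (le_of_lt (Set.mem_Ioi.1 hy))))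
  · apply ContinuousOn.intervalIntegrable
    apply (hf.continuousOn_derivWithin (uniqueDiffOn_Ici 0) le_rfl).mono
    rw [Set.uIcc_of_le hcd]; exact hIcc

lemma hardy_aux_exp_integral {b : ℝ} (hb : 0 < b) {c d : ℝ} (hcd : c ≤ d) :
    ∫ x in c..d, Real.exp (-(b * x)) ≤ Real.exp (-(b * c)) / b := by
  have hF : ∀ x ∈ Set.uIcc c d, HasDerivAt (fun y : ℝ => -(Real.exp (-(b * y)) / b))
      (Real.exp (-(b * x))) x := by
    intro x _
    have h1 : HasDerivAt (fun y : ℝ => -(b * y)) (-b) x := by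
      simpa using ((hasDerivAt_id x).const_mul b).fun_neg
    have h2 := (h1.exp.div_const b).fun_neg
    exact h2.congr_deriv (by rw [mul_neg, neg_div, neg_neg, mul_div_assoc, div_self hb.ne', mul_one])
  rw [intervalIntegral.integral_eq_sub_of_hasDerivAt hF
    (Continuous.intervalIntegrable (by continuity) c d)]
  have : 0 ≤ Real.exp (-(b * d)) / b := by positivity
  linarith

lemma hardy_aux_decay (f : ℝ → ℝ) (hf : ContDiffOn ℝ 1 f (Set.Ici 0))
    (p a : ℝ) (hp : 1 < p) (ha : 0 < a)
    (hint : IntegrableOn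
      (fun r : ℝ => |derivWithin f (Set.Ici 0) r| ^ p * Real.exp (a * r)) (Set.Ici (0:ℝ)) volume)
    (hlim : Tendsto f atTop (nhds 0)) {R : ℝ} (hR : 0 ≤ R) :
    |f R| ≤ (∫ s in Set.Ici R, |derivWithin f (Set.Ici 0) s| ^ p * Real.exp (a * s)) ^ (1/p) *
        ((p / (a * (p / (p - 1)))) ^ (1/(p / (p - 1))) * Real.exp (-(a * R / p))) := by
  set g := derivWithin f (Set.Ici 0) with hgdef
  set q := p / (p - 1) with hqdef
  have hpq : p.HolderConjugate q := Real.HolderConjugate.conjExponent hp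
  have hp0 : (0:ℝ) < p := hpq.pos
  have hq0 : (0:ℝ) < q := hpq.symm.pos
  have hgc : ContinuousOn g (Set.Ici 0) := hf.continuousOn_derivWithin (uniqueDiffOn_Ici 0) le_rfl
  set A := ∫ s in Set.Ici R, |g s| ^ p * Real.exp (a * s) with hAdef
  have hintR : IntegrableOn (fun s => |g s| ^ p * Real.exp (a * s)) (Set.Ici R) volume :=
    hint.mono_set (Set.Ici_subset_Ici.2 hR)
  have hA0 : 0 ≤ A := setIntegral_nonneg measurableSet_Ici (fun x _ => by positivity)
  set C := A ^ (1/p) * ((p / (a * q)) ^ (1/q) * Real.exp (-(a * R / p))) with hCdef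
  have key : ∀ T, R ≤ T → |f R| ≤ |f T| + C := by
    intro T hT
    have h1 : |f R| - |f T| ≤ ∫ x in R..T, |g x| := by
      have hftc := hardy_aux_ftc f hf hR hT
      calc |f R| - |f T| ≤ |f R - f T| := abs_sub_abs_le_abs_sub _ _
        _ = |∫ x in R..T, g x| := by rw [hftc, abs_sub_comm]
        _ ≤ ∫ x in R..T, |g x| := intervalIntegral.abs_integral_le_integral_abs hT
    have h2 : ∫ x in R..T, |g x| ≤ C := by
      rw [intervalIntegral.integral_of_le hT]
      haveI : IsFiniteMeasure (volume.restrict (Set.Ioc R T)) :=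
        ⟨by rw [Measure.restrict_apply_univ]; exact measure_Ioc_lt_top⟩
      have hmeas : MeasurableSet (Set.Ioc R T) := measurableSet_Ioc
      set u := fun s => |g s| * Real.exp (a * s / p) with hudef
      set v := fun s => Real.exp (-(a * s / p)) with hvdef
      have hIccIci : Set.Icc R T ⊆ Set.Ici (0:ℝ) := fun x hx => le_trans hR hx.1
      have hucont : ContinuousOn u (Set.Icc R T) := by
        apply ContinuousOn.mul ((hgc.mono hIccIci).abs)
        exact (Real.continuous_exp.comp (by continuity)).continuousOn
      obtain ⟨M, hM⟩ := (isCompact_Icc (a := R) (b := T)).exists_bound_of_continuousOn hucont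
      have hu : MemLp u (ENNReal.ofReal p) (volume.restrict (Set.Ioc R T)) := by
        apply MemLp.of_bound ((hucont.mono Set.Ioc_subset_Icc_self).aestronglyMeasurable hmeas) M
        exact (ae_restrict_iff' hmeas).2 (ae_of_all _ fun x hx => hM x (Set.Ioc_subset_Icc_self hx))
      have hv : MemLp v (ENNReal.ofReal q) (volume.restrict (Set.Ioc R T)) := by
        apply MemLp.of_bound ((Real.continuous_exp.comp (by continuity)).aestronglyMeasurable) 1
        apply (ae_restrict_iff' hmeas).2
        apply ae_of_all
        intro x hx
        have hx0 : (0:ℝ) ≤ x := hR.trans hx.1.le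
        simp only [Function.comp_apply, hvdef, Real.norm_eq_abs, abs_of_pos (Real.exp_pos _)]
        apply Real.exp_le_one_iff.2
        have : 0 ≤ a * x / p := by positivity
        linarith
      have hold := integral_mul_le_Lp_mul_Lq_of_nonneg hpq
        (ae_of_all _ fun s => by positivity) (ae_of_all _ fun s => by positivity) hu hv
      have huv : ∀ s, |g s| = u s * v s := by
        intro s
        rw [hudef, hvdef]
        simp only [mul_assoc, ← Real.exp_add]
        rw [add_neg_cancel, Real.exp_zero, mul_one]
      have hup : ∀ s, u s ^ p = |g s| ^ p * Real.exp (a * s) := by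
        intro s
        rw [hudef, Real.mul_rpow (abs_nonneg _) (Real.exp_pos _).le,
          ← Real.exp_mul]
        congr 2
        field_simp
      have hvq : ∀ s, v s ^ q = Real.exp (-(a * q / p * s)) := by
        intro s
        rw [hvdef, ← Real.exp_mul]
        congr 1
        ring
      have hFu : ∫ s in Set.Ioc R T, u s ^ p ≤ A := by
        rw [show (fun s => u s ^ p) = fun s => |g s| ^ p * Real.exp (a * s) from funext hup]
        exact setIntegral_mono_set hintR
          ((ae_restrict_iff' measurableSet_Ici).2 (ae_of_all _ fun x _ => by positivity))
          (HasSubset.Subset.eventuallyLE (fun x hx => le_of_lt hx.1))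
      have hFv : ∫ s in Set.Ioc R T, v s ^ q ≤ p / (a * q) * Real.exp (-(a * q / p * R)) := by
        rw [show (fun s => v s ^ q) = fun s => Real.exp (-(a * q / p * s)) from funext hvq,
          ← intervalIntegral.integral_of_le hT]
        have hb : (0:ℝ) < a * q / p := by positivity
        calc ∫ x in R..T, Real.exp (-(a * q / p * x)) ≤ Real.exp (-(a * q / p * R)) / (a * q / p) :=
              hardy_aux_exp_integral hb hT
          _ = p / (a * q) * Real.exp (-(a * q / p * R)) := by field_simp
      calc ∫ s in Set.Ioc R T, |g s|
          = ∫ s in Set.Ioc R T, u s * v s := by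
            exact integral_congr_ae (ae_of_all _ fun s => huv s)
        _ ≤ (∫ s in Set.Ioc R T, u s ^ p) ^ (1/p) * (∫ s in Set.Ioc R T, v s ^ q) ^ (1/q) := hold
        _ ≤ A ^ (1/p) * (p / (a * q) * Real.exp (-(a * q / p * R))) ^ (1/q) := by
            apply mul_le_mul
            · exact Real.rpow_le_rpow (integral_nonneg fun s => by positivity) hFu (by positivity)
            · exact Real.rpow_le_rpow (integral_nonneg fun s => by positivity) hFv (by positivity)
            · positivity
            · positivity
        _ = C := by
            rw [hCdef]
            congr 1
            rw [Real.mul_rpow (by positivity) (Real.exp_pos _).le, ← Real.exp_mul]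
            congr 2
            field_simp
    linarith
  have htend : Tendsto (fun T => |f T| + C) atTop (nhds C) := by
    have h0 : Tendsto (fun T => |f T|) atTop (nhds 0) := by
      simpa using hlim.abs
    simpa using h0.add (tendsto_const_nhds (x := C))
  exact ge_of_tendsto htend (eventually_atTop.2 ⟨R, key⟩)

lemma hardy_aux_measurable_sign : Measurable Real.sign := by
  unfold Real.sign
  exact Measurable.ite (measurableSet_lt measurable_id' measurable_const) measurable_const
    (Measurable.ite (measurableSet_lt measurable_const measurable_id') measurable_const
      measurable_const)

lemma hardy_aux_abs_sign (r : ℝ) : |Real.sign r| ≤ 1 := by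
  rcases Real.sign_apply_eq r with h | h | h <;> rw [h] <;> norm_num

lemma hardy_aux_ibp (f : ℝ → ℝ) (hf : ContDiffOn ℝ 1 f (Set.Ici 0))
    (p a : ℝ) (hp : 1 < p) (ha : 0 < a) {R : ℝ} (hR : 0 ≤ R) :
    a * ∫ s in Set.Ioc 0 R, |f s| ^ p * Real.exp (a * s) ≤
      |f R| ^ p * Real.exp (a * R) +
        p * ∫ s in Set.Ioc 0 R, |f s| ^ (p - 1) * |derivWithin f (Set.Ici 0) s| *
          Real.exp (a * s) := by
  set g := derivWithin f (Set.Ici 0) with hgdef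
  have hp0 : (0:ℝ) < p := by linarith
  have hgc : ContinuousOn g (Set.Ici 0) := hf.continuousOn_derivWithin (uniqueDiffOn_Ici 0) le_rfl
  have hIcc : Set.Icc (0:ℝ) R ⊆ Set.Ici 0 := fun x hx => hx.1
  have hfc : ContinuousOn f (Set.Icc 0 R) := hf.continuousOn.mono hIcc
  set ψ := fun t : ℝ => p * |t| ^ (p - 1) * Real.sign t with hψdef
  set D := fun x => ψ (f x) * g x * Real.exp (a * x) + |f x| ^ p * (Real.exp (a * x) * a)
    with hDdef
  set E := fun x => p * |f x| ^ (p - 1) * |g x| * Real.exp (a * x) with hEdef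
  -- continuity facts
  have hfp1 : ContinuousOn (fun x => |f x| ^ (p - 1)) (Set.Icc 0 R) :=
    (hfc.abs).rpow_const (fun x _ => Or.inr (by linarith))
  have hfp : ContinuousOn (fun x => |f x| ^ p) (Set.Icc 0 R) :=
    (hfc.abs).rpow_const (fun x _ => Or.inr hp0.le)
  have hexpc : ContinuousOn (fun x : ℝ => Real.exp (a * x)) (Set.Icc 0 R) :=
    (Real.continuous_exp.comp (by continuity)).continuousOn
  have hEc : ContinuousOn E (Set.Icc 0 R) := by
    apply ContinuousOn.mul _ hexpc
    exact (continuousOn_const.mul hfp1).mul ((hgc.mono hIcc).abs)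
  have hfpec : ContinuousOn (fun x => |f x| ^ p * (Real.exp (a * x) * a)) (Set.Icc 0 R) :=
    hfp.mul (hexpc.mul continuousOn_const)
  -- pointwise domination |D x| ≤ E x + |f x|^p * (exp (a x) * a)
  have hDbound : ∀ x, |D x| ≤ E x + |f x| ^ p * (Real.exp (a * x) * a) := by
    intro x
    refine (abs_add_le _ _).trans (add_le_add ?_ ?_)
    · rw [hψdef, hEdef]
      simp only [abs_mul, abs_abs, abs_of_pos (Real.exp_pos _), abs_of_pos hp0,
        abs_of_nonneg (Real.rpow_nonneg (abs_nonneg (f x)) (p - 1))]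
      have h1 : |Real.sign (f x)| ≤ 1 := hardy_aux_abs_sign _
      have h2 : (0:ℝ) ≤ p * |f x| ^ (p - 1) := by positivity
      calc p * |f x| ^ (p - 1) * |Real.sign (f x)| * |g x| * Real.exp (a * x)
          ≤ p * |f x| ^ (p - 1) * 1 * |g x| * Real.exp (a * x) := by
            apply mul_le_mul_of_nonneg_right _ (Real.exp_pos _).le
            apply mul_le_mul_of_nonneg_right _ (abs_nonneg _)
            exact mul_le_mul_of_nonneg_left h1 h2
        _ = p * |f x| ^ (p - 1) * |g x| * Real.exp (a * x) := by ring
    · rw [abs_of_nonneg (by positivity)]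
  -- measurability of D on the interval
  have hDm : AEStronglyMeasurable D (volume.restrict (Set.Ioc 0 R)) := by
    have hfm : AEMeasurable f (volume.restrict (Set.Ioc 0 R)) :=
      ((hfc.mono Set.Ioc_subset_Icc_self).aestronglyMeasurable measurableSet_Ioc).aemeasurable
    have hgm : AEMeasurable g (volume.restrict (Set.Ioc 0 R)) :=
      (((hgc.mono (Set.Ioc_subset_Icc_self.trans hIcc)).aestronglyMeasurable
        measurableSet_Ioc)).aemeasurable
    have hsg : AEMeasurable (fun x => Real.sign (f x)) (volume.restrict (Set.Ioc 0 R)) :=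
      hardy_aux_measurable_sign.comp_aemeasurable hfm
    have hcont1 : Continuous (fun y : ℝ => |y| ^ (p - 1)) :=
      continuous_iff_continuousAt.2 fun y =>
        (Real.continuousAt_rpow_const _ _ (Or.inr (by linarith))).comp
          continuous_abs.continuousAt
    have hcont2 : Continuous (fun y : ℝ => |y| ^ p) :=
      continuous_iff_continuousAt.2 fun y =>
        (Real.continuousAt_rpow_const _ _ (Or.inr hp0.le)).comp continuous_abs.continuousAt
    have h1 : AEMeasurable (fun x => |f x| ^ (p - 1)) (volume.restrict (Set.Ioc 0 R)) :=
      hcont1.measurable.comp_aemeasurable hfm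
    have h2 : AEMeasurable (fun x => |f x| ^ p) (volume.restrict (Set.Ioc 0 R)) :=
      hcont2.measurable.comp_aemeasurable hfm
    have hexp : AEMeasurable (fun x : ℝ => Real.exp (a * x)) (volume.restrict (Set.Ioc 0 R)) :=
      (Real.continuous_exp.comp (by continuity)).measurable.aemeasurable
    apply AEMeasurable.aestronglyMeasurable
    exact ((((aemeasurable_const.mul h1).mul hsg).mul hgm).mul hexp).add
      (h2.mul (hexp.mul aemeasurable_const))
  -- interval integrability of the pieces
  have hφpart_ii : IntervalIntegrable (fun x => |f x| ^ p * (Real.exp (a * x) * a)) volume 0 R :=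
    (hfpec.mono (Set.uIcc_of_le hR ▸ le_refl _)).intervalIntegrable
  have hE_ii : IntervalIntegrable E volume 0 R :=
    (hEc.mono (Set.uIcc_of_le hR ▸ le_refl _)).intervalIntegrable
  have hD_ii : IntervalIntegrable D volume 0 R := by
    rw [intervalIntegrable_iff_integrableOn_Ioc_of_le hR]
    obtain ⟨M, hM⟩ := (isCompact_Icc (a := (0:ℝ)) (b := R)).exists_bound_of_continuousOn
      (hEc.add hfpec)
    apply Integrable.mono' (g := fun _ => M) (integrable_const M) hDm
    apply (ae_restrict_iff' measurableSet_Ioc).2 (ae_of_all _ fun x hx => ?_)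
    calc ‖D x‖ ≤ E x + |f x| ^ p * (Real.exp (a * x) * a) := hDbound x
      _ ≤ M := by
          have := hM x (Set.Ioc_subset_Icc_self hx)
          rw [Real.norm_eq_abs, abs_of_nonneg (show 0 ≤ (E + fun x => |f x| ^ p * (Real.exp (a * x) * a)) x by simp only [hEdef, Pi.add_apply]; positivity)] at this
          exact this
  have hψpart_ii : IntervalIntegrable (fun x => ψ (f x) * g x * Real.exp (a * x)) volume 0 R := by
    have : (fun x => ψ (f x) * g x * Real.exp (a * x)) =
        fun x => D x - |f x| ^ p * (Real.exp (a * x) * a) := by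
      funext x; rw [hDdef]; ring
    rw [this]
    exact hD_ii.sub hφpart_ii
  -- FTC
  have hftc : ∫ x in (0:ℝ)..R, D x = |f R| ^ p * Real.exp (a * R) - |f 0| ^ p * Real.exp (a * 0) := by
    apply intervalIntegral.integral_eq_sub_of_hasDeriv_right_of_le hR
      (hfp.mul hexpc) _ hD_ii
    intro x hx
    have hx0 : x ∈ Set.Ici (0:ℝ) := le_of_lt hx.1
    have hfd : HasDerivWithinAt f (g x) (Set.Ioi x) x :=
      ((hf.differentiableOn one_ne_zero x hx0).hasDerivWithinAt).mono
        (fun y hy => Set.mem_Ici.2 (le_trans (Set.mem_Ici.1 hx0) (le_of_lt (Set.mem_Ioi.1 hy))))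
    have h1 : HasDerivWithinAt (fun r => |f r| ^ p) (ψ (f x) * g x) (Set.Ioi x) x :=
      (hardy_aux_hasDerivAt_abs_rpow hp (f x)).comp_hasDerivWithinAt x hfd
    have h2 : HasDerivAt (fun r : ℝ => Real.exp (a * r)) (Real.exp (a * x) * a) x := by
      simpa using (((hasDerivAt_id x).const_mul a).exp)
    exact h1.mul h2.hasDerivWithinAt
  -- split the integral of D
  have hsplit : ∫ x in (0:ℝ)..R, D x =
      (∫ x in (0:ℝ)..R, ψ (f x) * g x * Real.exp (a * x)) +
        ∫ x in (0:ℝ)..R, |f x| ^ p * (Real.exp (a * x) * a) := by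
    rw [hDdef, ← intervalIntegral.integral_add hψpart_ii hφpart_ii]
  -- bound the ψ part from below
  have hψlow : -(∫ x in (0:ℝ)..R, E x) ≤ ∫ x in (0:ℝ)..R, ψ (f x) * g x * Real.exp (a * x) := by
    rw [← intervalIntegral.integral_neg]
    apply intervalIntegral.integral_mono_on hR hE_ii.neg hψpart_ii
    intro x _
    simp only [Pi.neg_apply]
    have h := hDbound x
    have : |ψ (f x) * g x * Real.exp (a * x)| ≤ E x := by
      rw [hψdef, hEdef]
      simp only [abs_mul, abs_abs, abs_of_pos (Real.exp_pos _), abs_of_pos hp0,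
        abs_of_nonneg (Real.rpow_nonneg (abs_nonneg (f x)) (p - 1))]
      calc p * |f x| ^ (p - 1) * |Real.sign (f x)| * |g x| * Real.exp (a * x)
          ≤ p * |f x| ^ (p - 1) * 1 * |g x| * Real.exp (a * x) := by
            apply mul_le_mul_of_nonneg_right _ (Real.exp_pos _).le
            apply mul_le_mul_of_nonneg_right _ (abs_nonneg _)
            exact mul_le_mul_of_nonneg_left (hardy_aux_abs_sign _) (by positivity)
        _ = p * |f x| ^ (p - 1) * |g x| * Real.exp (a * x) := by ring
    linarith [neg_abs_le (ψ (f x) * g x * Real.exp (a * x))]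
  -- put everything together
  have hEeq : ∫ x in (0:ℝ)..R, E x = p * ∫ s in Set.Ioc 0 R, |f s| ^ (p - 1) * |g s| *
      Real.exp (a * s) := by
    rw [intervalIntegral.integral_of_le hR, hEdef, ← integral_const_mul]
    congr 1; funext x; ring
  have hmain : ∫ x in (0:ℝ)..R, |f x| ^ p * (Real.exp (a * x) * a) =
      a * ∫ s in Set.Ioc 0 R, |f s| ^ p * Real.exp (a * s) := by
    rw [intervalIntegral.integral_of_le hR, ← integral_const_mul]
    congr 1; funext x; ring
  have h0le : 0 ≤ |f 0| ^ p * Real.exp (a * 0) := by positivity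
  have := hftc
  rw [hsplit] at this
  nlinarith [hψlow, hEeq, hmain]

lemma hardy_aux_holder (f : ℝ → ℝ) (hf : ContDiffOn ℝ 1 f (Set.Ici 0))
    (p a : ℝ) (hp : 1 < p) (ha : 0 < a)
    (hint : IntegrableOn
      (fun r : ℝ => |derivWithin f (Set.Ici 0) r| ^ p * Real.exp (a * r)) (Set.Ici (0:ℝ)) volume)
    {R : ℝ} (hR : 0 ≤ R) :
    ∫ s in Set.Ioc 0 R, |f s| ^ (p - 1) * |derivWithin f (Set.Ici 0) s| * Real.exp (a * s) ≤
      (∫ s in Set.Ioc 0 R, |f s| ^ p * Real.exp (a * s)) ^ (1 - 1/p) *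
        (∫ s in Set.Ici 0, |derivWithin f (Set.Ici 0) s| ^ p * Real.exp (a * s)) ^ (1/p) := by
  set g := derivWithin f (Set.Ici 0) with hgdef
  set q := p / (p - 1) with hqdef
  have hpq : p.HolderConjugate q := Real.HolderConjugate.conjExponent hp
  have hp0 : (0:ℝ) < p := hpq.pos
  have hq0 : (0:ℝ) < q := hpq.symm.pos
  have h1q : 1 - 1/p = 1/q := by
    rw [hqdef]; field_simp
  have hgc : ContinuousOn g (Set.Ici 0) := hf.continuousOn_derivWithin (uniqueDiffOn_Ici 0) le_rfl
  have hIcc : Set.Icc (0:ℝ) R ⊆ Set.Ici 0 := fun x hx => hx.1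
  have hfc : ContinuousOn f (Set.Icc 0 R) := hf.continuousOn.mono hIcc
  haveI : IsFiniteMeasure (volume.restrict (Set.Ioc (0:ℝ) R)) :=
    ⟨by rw [Measure.restrict_apply_univ]; exact measure_Ioc_lt_top⟩
  have hmeas : MeasurableSet (Set.Ioc (0:ℝ) R) := measurableSet_Ioc
  set u := fun s => |f s| ^ (p - 1) * Real.exp (a * s / q) with hudef
  set v := fun s => |g s| * Real.exp (a * s / p) with hvdef
  have hucont : ContinuousOn u (Set.Icc 0 R) := by
    apply ContinuousOn.mul ((hfc.abs).rpow_const (fun x _ => Or.inr (by linarith)))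
    exact (Real.continuous_exp.comp (by continuity)).continuousOn
  have hvcont : ContinuousOn v (Set.Icc 0 R) := by
    apply ContinuousOn.mul ((hgc.mono hIcc).abs)
    exact (Real.continuous_exp.comp (by continuity)).continuousOn
  obtain ⟨M, hM⟩ := (isCompact_Icc (a := (0:ℝ)) (b := R)).exists_bound_of_continuousOn hucont
  obtain ⟨N, hN⟩ := (isCompact_Icc (a := (0:ℝ)) (b := R)).exists_bound_of_continuousOn hvcont
  have hu : MemLp u (ENNReal.ofReal q) (volume.restrict (Set.Ioc 0 R)) := by
    apply MemLp.of_bound ((hucont.mono Set.Ioc_subset_Icc_self).aestronglyMeasurable hmeas) M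
    exact (ae_restrict_iff' hmeas).2 (ae_of_all _ fun x hx => hM x (Set.Ioc_subset_Icc_self hx))
  have hv : MemLp v (ENNReal.ofReal p) (volume.restrict (Set.Ioc 0 R)) := by
    apply MemLp.of_bound ((hvcont.mono Set.Ioc_subset_Icc_self).aestronglyMeasurable hmeas) N
    exact (ae_restrict_iff' hmeas).2 (ae_of_all _ fun x hx => hN x (Set.Ioc_subset_Icc_self hx))
  have hold := integral_mul_le_Lp_mul_Lq_of_nonneg hpq.symm
    (ae_of_all _ fun s => by positivity) (ae_of_all _ fun s => by positivity) hu hv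
  have huv : ∀ s, |f s| ^ (p - 1) * |g s| * Real.exp (a * s) = u s * v s := by
    intro s
    rw [hudef, hvdef]
    have : Real.exp (a * s / q) * Real.exp (a * s / p) = Real.exp (a * s) := by
      rw [← Real.exp_add]
      congr 1
      field_simp
      rw [mul_assoc, mul_comm q p, hpq.mul_eq_add]
    rw [← this]; ring
  have huq : ∀ s, u s ^ q = |f s| ^ p * Real.exp (a * s) := by
    intro s
    rw [hudef, Real.mul_rpow (by positivity) (Real.exp_pos _).le, ← Real.rpow_mul (abs_nonneg _),
      hpq.sub_one_mul_conj, ← Real.exp_mul]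
    congr 2
    field_simp
  have hvp : ∀ s, v s ^ p = |g s| ^ p * Real.exp (a * s) := by
    intro s
    rw [hvdef, Real.mul_rpow (by positivity) (Real.exp_pos _).le, ← Real.exp_mul]
    congr 2
    field_simp
  have hFv : ∫ s in Set.Ioc 0 R, v s ^ p ≤ ∫ s in Set.Ici 0, |g s| ^ p * Real.exp (a * s) := by
    rw [show (fun s => v s ^ p) = fun s => |g s| ^ p * Real.exp (a * s) from funext hvp]
    exact setIntegral_mono_set hint
      ((ae_restrict_iff' measurableSet_Ici).2 (ae_of_all _ fun x _ => by positivity))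
      (HasSubset.Subset.eventuallyLE (fun x hx => le_of_lt hx.1))
  calc ∫ s in Set.Ioc 0 R, |f s| ^ (p - 1) * |g s| * Real.exp (a * s)
      = ∫ s in Set.Ioc 0 R, u s * v s := integral_congr_ae (ae_of_all _ huv)
    _ ≤ (∫ s in Set.Ioc 0 R, u s ^ q) ^ (1/q) * (∫ s in Set.Ioc 0 R, v s ^ p) ^ (1/p) := hold
    _ ≤ (∫ s in Set.Ioc 0 R, |f s| ^ p * Real.exp (a * s)) ^ (1 - 1/p) *
        (∫ s in Set.Ici 0, |g s| ^ p * Real.exp (a * s)) ^ (1/p) := by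
        rw [h1q, show (fun s => u s ^ q) = fun s => |f s| ^ p * Real.exp (a * s) from funext huq]
        apply mul_le_mul_of_nonneg_left _ (by positivity)
        exact Real.rpow_le_rpow (integral_nonneg fun s => by positivity) hFv (by positivity)

/-- Hardy-type inequality with exponential weight: for `p > 1`, `a > 0`
and `f : [0,∞) → ℝ` of class `C¹` with `∫_0^∞ |f'(r)|^p e^{ar} dr < ∞` and
`f(r) → 0` as `r → ∞`, one has
`∫_0^∞ |f(r)|^p e^{ar} dr ≤ (p/a)^p ∫_0^∞ |f'(r)|^p e^{ar} dr`.
(Stated with lower integrals in `ℝ≥0∞` so that no integrability of the left-hand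
side needs to be assumed.) -/
theorem hardy_inequality_exponential_weight
    (f : ℝ → ℝ) (hf : ContDiffOn ℝ 1 f (Set.Ici 0))
    (p a : ℝ) (hp : 1 < p) (ha : 0 < a)
    (hint : IntegrableOn
      (fun r : ℝ => |derivWithin f (Set.Ici 0) r| ^ p * Real.exp (a * r))
      (Set.Ici (0 : ℝ)) volume)
    (hlim : Tendsto f atTop (nhds 0)) :
    ∫⁻ r in Set.Ici (0 : ℝ), ENNReal.ofReal (|f r| ^ p * Real.exp (a * r)) ≤
      ENNReal.ofReal ((p / a) ^ p) *
        ∫⁻ r in Set.Ici (0 : ℝ),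
          ENNReal.ofReal (|derivWithin f (Set.Ici 0) r| ^ p * Real.exp (a * r)) := by
  set g := derivWithin f (Set.Ici 0) with hgdef
  set q := p / (p - 1) with hqdef
  have hpq : p.HolderConjugate q := Real.HolderConjugate.conjExponent hp
  have hp0 : (0:ℝ) < p := hpq.pos
  have hq0 : (0:ℝ) < q := hpq.symm.pos
  have h1q : 1 - 1/p = 1/q := by rw [hqdef]; field_simp
  have hgc : ContinuousOn g (Set.Ici 0) := hf.continuousOn_derivWithin (uniqueDiffOn_Ici 0) le_rfl
  set h : ℝ → ℝ := fun r => |f r| ^ p * Real.exp (a * r) with hhdef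
  set w : ℝ → ℝ := fun r => |g r| ^ p * Real.exp (a * r) with hwdef
  have hhc : ContinuousOn h (Set.Ici 0) := by
    apply ContinuousOn.mul _ ((Real.continuous_exp.comp (by continuity)).continuousOn)
    exact (hf.continuousOn.abs).rpow_const (fun x _ => Or.inr hp0.le)
  set A := ∫ s in Set.Ici (0:ℝ), w s with hAdef
  have hA0 : 0 ≤ A := setIntegral_nonneg measurableSet_Ici (fun x _ => by positivity)
  set B := (p / a) * A ^ (1/p) with hBdef
  have hB0 : 0 ≤ B := by positivity
  have hBp : B ^ p = (p / a) ^ p * A := by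
    rw [hBdef, Real.mul_rpow (by positivity) (Real.rpow_nonneg hA0 _),
      ← Real.rpow_mul hA0, one_div, inv_mul_cancel₀ hp0.ne', Real.rpow_one]
  -- the truncated integrals
  set I : ℕ → ℝ := fun n => ∫ s in Set.Ioc (0:ℝ) n, h s with hIdef
  have hI_int : ∀ n : ℕ, IntegrableOn h (Set.Ioc (0:ℝ) n) volume := by
    intro n
    apply IntegrableOn.mono_set _ Set.Ioc_subset_Icc_self
    exact (hhc.mono (fun x hx => hx.1)).integrableOn_Icc
  have hI0 : ∀ n : ℕ, 0 ≤ I n := fun n =>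
    setIntegral_nonneg measurableSet_Ioc (fun x _ => by positivity)
  have hI_mono : ∀ m n : ℕ, m ≤ n → I m ≤ I n := by
    intro m n hmn
    apply setIntegral_mono_set (hI_int n)
      ((ae_restrict_iff' measurableSet_Ioc).2 (ae_of_all _ fun x _ => by positivity))
    exact HasSubset.Subset.eventuallyLE (Set.Ioc_subset_Ioc_right (by exact_mod_cast hmn))
  -- the boundary terms
  set ε : ℕ → ℝ := fun n => |f n| ^ p * Real.exp (a * n) with hεdef
  have hε0 : ∀ n : ℕ, 0 ≤ ε n := fun n => by positivity
  -- the key recursive inequality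
  have hkey : ∀ n : ℕ, I n ≤ p / a * ε n + B ^ p := by
    intro n
    have hn0 : (0:ℝ) ≤ n := Nat.cast_nonneg n
    have h1 := hardy_aux_ibp f hf p a hp ha hn0
    have h2 := hardy_aux_holder f hf p a hp ha hint hn0
    have h3 : a * I n ≤ ε n + p * ((I n) ^ (1 - 1/p) * A ^ (1/p)) := by
      refine h1.trans (add_le_add_right ?_ _)
      exact mul_le_mul_of_nonneg_left h2 hp0.le
    have hab : p * ((I n) ^ (1 - 1/p) * A ^ (1/p)) = a * (B * (I n) ^ (1 - 1/p)) := by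
      rw [hBdef]; field_simp
    have hyoung : B * (I n) ^ (1 - 1/p) ≤ B ^ p / p + I n / q := by
      have hy := Real.young_inequality_of_nonneg hB0
        (Real.rpow_nonneg (hI0 n) (1 - 1/p)) hpq
      have : ((I n) ^ (1 - 1/p)) ^ q = I n := by
        rw [← Real.rpow_mul (hI0 n), h1q, one_div, inv_mul_cancel₀ hq0.ne', Real.rpow_one]
      rwa [this] at hy
    have h4 : a * I n ≤ ε n + a * (B ^ p / p + I n / q) := by
      rw [hab] at h3
      exact h3.trans (add_le_add_right (mul_le_mul_of_nonneg_left hyoung ha.le) _)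
    have hap : (0:ℝ) < a * (1/p) := by positivity
    rw [← mul_le_mul_iff_right₀ hap]
    have hrhs : a * (1/p) * (p / a * ε n + B ^ p) = ε n + a * (1/p) * B ^ p := by
      field_simp
    rw [hrhs]
    have hlhs : a * (1/p) * I n = a * I n - a * (I n / q) := by
      have hIq : I n / q = I n * (1 - 1/p) := by rw [div_eq_mul_one_div, ← h1q]
      rw [hIq]; ring
    have hexp : a * (B ^ p / p + I n / q) = a * (1/p) * B ^ p + a * (I n / q) := by ring
    rw [hexp] at h4
    linarith
  -- the boundary terms tend to zero
  have hεlim : Tendsto ε atTop (nhds 0) := by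
    set K1 := (p / (a * q)) ^ (1/q) with hK1def
    have hK10 : 0 ≤ K1 := by positivity
    set An : ℕ → ℝ := fun n => ∫ s in Set.Ici (n:ℝ), w s with hAndef
    have hAn0 : ∀ n, 0 ≤ An n := fun n =>
      setIntegral_nonneg measurableSet_Ici (fun x _ => by positivity)
    have hεbound : ∀ n : ℕ, ε n ≤ K1 ^ p * An n := by
      intro n
      have hn0 : (0:ℝ) ≤ n := Nat.cast_nonneg n
      have hd := hardy_aux_decay f hf p a hp ha hint hlim hn0
      have h5 : |f n| ^ p ≤ ((An n) ^ (1/p) * (K1 * Real.exp (-(a * n / p)))) ^ p :=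
        Real.rpow_le_rpow (abs_nonneg _) hd hp0.le
      have h6 : ((An n) ^ (1/p) * (K1 * Real.exp (-(a * n / p)))) ^ p =
          An n * (K1 ^ p * Real.exp (-(a * n))) := by
        rw [Real.mul_rpow (by positivity) (by positivity),
          Real.mul_rpow hK10 (Real.exp_pos _).le,
          ← Real.rpow_mul (hAn0 n), one_div, inv_mul_cancel₀ hp0.ne', Real.rpow_one,
          ← Real.exp_mul]
        congr 3
        field_simp
      rw [h6] at h5
      calc ε n ≤ An n * (K1 ^ p * Real.exp (-(a * n))) * Real.exp (a * n) := by
            rw [hεdef]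
            exact mul_le_mul_of_nonneg_right h5 (Real.exp_pos _).le
        _ = K1 ^ p * An n := by
            rw [mul_assoc, mul_assoc, ← Real.exp_add, neg_add_cancel, Real.exp_zero]
            ring
    have hAnlim : Tendsto An atTop (nhds 0) := by
      have hmono : Monotone (fun n : ℕ => Set.Ico (0:ℝ) n) := by
        intro m n hmn
        exact Set.Ico_subset_Ico_right (by exact_mod_cast hmn)
      have hunion : (⋃ n : ℕ, Set.Ico (0:ℝ) n) = Set.Ici 0 := by
        ext x
        simp only [Set.mem_iUnion, Set.mem_Ico, Set.mem_Ici]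
        constructor
        · rintro ⟨n, hn, _⟩; exact hn
        · intro hx; exact ⟨⌈x⌉₊ + 1, hx, by
            have := Nat.le_ceil x
            push_cast; linarith⟩
      have htend := tendsto_setIntegral_of_monotone (μ := volume) (f := w)
        (fun n : ℕ => measurableSet_Ico) hmono (by rw [hunion]; exact hint)
      rw [hunion] at htend
      have hsplit : ∀ n : ℕ, An n = A - ∫ s in Set.Ico (0:ℝ) n, w s := by
        intro n
        have hd : Disjoint (Set.Ico (0:ℝ) n) (Set.Ici (n:ℝ)) := by
          apply Set.disjoint_left.2
          intro x hx hx'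
          exact absurd hx.2 (not_lt.2 hx')
        have hu : Set.Ico (0:ℝ) n ∪ Set.Ici (n:ℝ) = Set.Ici 0 :=
          Set.Ico_union_Ici_eq_Ici (Nat.cast_nonneg n)
        have := setIntegral_union hd measurableSet_Ici
          ((hint.mono_set (fun x hx => hx.1)) : IntegrableOn w (Set.Ico (0:ℝ) n) volume)
          (hint.mono_set (Set.Ici_subset_Ici.2 (Nat.cast_nonneg n)))
        rw [hu] at this
        simp only [hAndef]
        linarith [this]
      have : An = fun n : ℕ => A - ∫ s in Set.Ico (0:ℝ) n, w s := funext hsplit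
      rw [this]
      have := (tendsto_const_nhds (x := A) (f := atTop (α := ℕ))).sub htend
      simpa [← hAdef] using this
    apply squeeze_zero hε0 hεbound
    simpa using (tendsto_const_nhds (x := K1 ^ p) (f := atTop (α := ℕ))).mul hAnlim
  -- conclude: each truncated integral is at most B ^ p
  have hfinal : ∀ m : ℕ, I m ≤ B ^ p := by
    intro m
    have htend : Tendsto (fun n : ℕ => p / a * ε n + B ^ p) atTop (nhds (B ^ p)) := by
      have := ((tendsto_const_nhds (x := p / a) (f := atTop (α := ℕ))).mul hεlim).add
        (tendsto_const_nhds (x := B ^ p))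
      simpa using this
    apply ge_of_tendsto htend
    exact eventually_atTop.2 ⟨m, fun n hn => (hI_mono m n hn).trans (hkey n)⟩
  -- pass to the lintegral
  have hRHS : ∫⁻ r in Set.Ici (0:ℝ), ENNReal.ofReal (w r) = ENNReal.ofReal A :=
    (ofReal_integral_eq_lintegral_ofReal hint (ae_of_all _ fun x => by positivity)).symm
  rw [hRHS, ← ENNReal.ofReal_mul (by positivity), ← hBp]
  rw [← restrict_Ioi_eq_restrict_Ici]
  set F : ℝ → ℝ≥0∞ := fun r => ENNReal.ofReal (h r) with hFdef
  have hFm : ∀ n : ℕ, AEMeasurable ((Set.Ioc (0:ℝ) n).indicator F) volume := by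
    intro n
    apply (aemeasurable_indicator_iff measurableSet_Ioc).2
    apply ENNReal.measurable_ofReal.comp_aemeasurable
    exact ((hhc.mono (fun x hx => le_of_lt hx.1)).aemeasurable measurableSet_Ioc)
  have hFmono : Monotone (fun n : ℕ => (Set.Ioc (0:ℝ) n).indicator F) := by
    intro m n hmn
    apply Set.indicator_le_indicator_of_subset
      (Set.Ioc_subset_Ioc_right (by exact_mod_cast hmn))
    exact fun x => zero_le
  have hind : (Set.Ioi (0:ℝ)).indicator F = fun x => ⨆ n : ℕ, (Set.Ioc (0:ℝ) n).indicator F x := by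
    funext x
    by_cases hx : x ∈ Set.Ioi (0:ℝ)
    · rw [Set.indicator_of_mem hx]
      apply le_antisymm
      · have hmem : x ∈ Set.Ioc (0:ℝ) ((⌈x⌉₊ : ℕ) : ℝ) := ⟨hx, Nat.le_ceil x⟩
        apply le_iSup_of_le ⌈x⌉₊
        rw [Set.indicator_of_mem hmem]
      · exact iSup_le fun n => Set.indicator_le_self _ _ x
    · rw [Set.indicator_of_notMem hx]
      symm
      simp only [ENNReal.iSup_eq_zero]
      intro n
      apply Set.indicator_of_notMem
      intro hmem
      exact hx hmem.1
  calc ∫⁻ r in Set.Ioi (0:ℝ), F r = ∫⁻ r, (Set.Ioi (0:ℝ)).indicator F r := by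
        rw [lintegral_indicator measurableSet_Ioi]
    _ = ⨆ n : ℕ, ∫⁻ r, (Set.Ioc (0:ℝ) n).indicator F r := by
        rw [hind]
        exact lintegral_iSup' hFm (ae_of_all _ fun x m n hmn => hFmono hmn x)
    _ = ⨆ n : ℕ, ∫⁻ r in Set.Ioc (0:ℝ) n, F r := by
        congr 1
        funext n
        rw [lintegral_indicator measurableSet_Ioc]
    _ ≤ ENNReal.ofReal (B ^ p) := by
        apply iSup_le
        intro n
        have := (ofReal_integral_eq_lintegral_ofReal (hI_int n)
          (ae_of_all _ fun x => by positivity)).symm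
        rw [hFdef, this]
        exact ENNReal.ofReal_le_ofReal (hfinal n)
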